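/- (Metric derivative of Lipschitz curves, Appendix B.) Let X be a metric space, L > 0, and ρ : ℝ → X a curve satisfying dist(ρ(s), ρ(t)) ≤ L·|s − t| for all s, t ∈ [0,1]. Then there exists a measurable function g : ℝ → ℝ with 0 ≤ g(t) ≤ L such that: (i) for Lebesgue-a.e. t ∈ (0,1), dist(ρ(t+h), ρ(t))/|h| tends to g(t) as h → 0; and (ii) for all 0 ≤ t ≤ s ≤ 1, dist(ρ(t), ρ(s)) ≤ ∫_t^s g(a) da. -/

import Mathlib

open MeasureTheory Filter

open Set Topology

/-- FTC-type inequality for Lipschitz functions: `f b - f a ≤ ∫ g` whenever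
`deriv f ≤ g` pointwise and `g` is integrable. -/
lemma lipschitz_sub_le_integral (L : ℝ) (hL : 0 ≤ L) (f g : ℝ → ℝ)
    (hf : ∀ x y : ℝ, |f x - f y| ≤ L * |x - y|)
    (hgi : ∀ a b : ℝ, IntegrableOn g (Set.Ioc a b))
    (hg : ∀ x, deriv f x ≤ g x) (a b : ℝ) (hab : a ≤ b) :
    f b - f a ≤ ∫ x in Set.Ioc a b, g x := by
  set ψ : ℝ → ℝ := fun t => L * t - f t with hψ
  have hψmono : Monotone ψ := by
    intro x y hxy
    have := (abs_le.1 (hf y x)).2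
    have hxy' : |y - x| = y - x := abs_of_nonneg (by linarith)
    simp only [hψ]
    rw [hxy'] at this
    nlinarith
  have hfcont : Continuous f := by
    have : LipschitzWith (Real.toNNReal L) f := by
      apply LipschitzWith.of_dist_le_mul
      intro x y
      rw [Real.dist_eq, Real.dist_eq, Real.coe_toNNReal L hL]
      exact hf x y
    exact this.continuous
  have hψcont : Continuous ψ := by continuity
  set S : StieltjesFunction ℝ := ⟨ψ, hψmono, fun x => hψcont.continuousWithinAt⟩ with hS
  set r : ℝ → ENNReal := S.measure.rnDeriv volume with hr
  have hd : ∀ᵐ x, HasDerivAt ψ (r x).toReal x := S.ae_hasDerivAt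
  have hfd : ∀ᵐ x, deriv f x = L - (r x).toReal := by
    filter_upwards [hd] with x hx
    have h2 : HasDerivAt f (L - (r x).toReal) x := by
      have : HasDerivAt (fun t => L * t - ψ t) (L - (r x).toReal) x := by
        simpa [Pi.sub_def] using ((hasDerivAt_id x).const_mul L).sub hx
      convert this using 2 with t
      simp [hψ]
    exact h2.deriv
  -- integral bound on rnDeriv
  have hrm : Measurable fun x => r x := Measure.measurable_rnDeriv _ _
  have hwd : volume.withDensity r ≤ S.measure := Measure.withDensity_rnDeriv_le _ _
  have hlt : (∫⁻ x in Set.Ioc a b, r x) ≤ ENNReal.ofReal (ψ b - ψ a) := by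
    rw [← withDensity_apply r measurableSet_Ioc, ← S.measure_Ioc]
    exact hwd _
  have hrint : IntegrableOn (fun x => (r x).toReal) (Set.Ioc a b) :=
    integrable_toReal_of_lintegral_ne_top hrm.aemeasurable.restrict
      (lt_of_le_of_lt hlt ENNReal.ofReal_lt_top).ne
  have hint : (∫ x in Set.Ioc a b, (r x).toReal) ≤ ψ b - ψ a := by
    have h0 : ∀ᵐ x ∂(volume.restrict (Set.Ioc a b)), r x < ⊤ :=
      ae_restrict_of_ae (Measure.rnDeriv_lt_top _ _)
    rw [integral_toReal hrm.aemeasurable.restrict h0]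
    calc (∫⁻ x in Set.Ioc a b, r x).toReal ≤ (ENNReal.ofReal (ψ b - ψ a)).toReal :=
          ENNReal.toReal_mono ENNReal.ofReal_ne_top hlt
      _ = ψ b - ψ a := ENNReal.toReal_ofReal (by have := hψmono hab; linarith)
  -- put together
  have hsub : (∫ x in Set.Ioc a b, (L - (r x).toReal)) = L * (b - a) - ∫ x in Set.Ioc a b, (r x).toReal := by
    have hcL : IntegrableOn (fun _ : ℝ => L) (Set.Ioc a b) := integrableOn_const measure_Ioc_lt_top.ne
    rw [integral_sub hcL hrint]
    congr 1
    simp [Real.volume_Ioc, ENNReal.toReal_ofReal (sub_nonneg.2 hab), mul_comm, hab]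
  have hmono : (∫ x in Set.Ioc a b, (L - (r x).toReal)) ≤ ∫ x in Set.Ioc a b, g x := by
    apply integral_mono_ae _ (hgi a b)
    · filter_upwards [ae_restrict_of_ae hfd] with x hx
      rw [← hx]; exact hg x
    · rw [hsub] at *
      exact (integrableOn_const measure_Ioc_lt_top.ne).sub hrint
  have : f b - f a = L * (b - a) - (ψ b - ψ a) := by simp [hψ]; ring
  rw [this]
  linarith [hsub, hmono, hint]

theorem metric_derivative_of_lipschitz {X : Type*} [MetricSpace X]
    (L : ℝ) (hL : 0 < L) (ρ : ℝ → X)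
    (hlip : ∀ s ∈ Set.Icc (0 : ℝ) 1, ∀ t ∈ Set.Icc (0 : ℝ) 1,
      dist (ρ s) (ρ t) ≤ L * |s - t|) :
    ∃ g : ℝ → ℝ, Measurable g ∧ (∀ t, 0 ≤ g t ∧ g t ≤ L) ∧
      (∀ᵐ t ∂(volume.restrict (Set.Ioo (0 : ℝ) 1)),
        Tendsto (fun h : ℝ => dist (ρ (t + h)) (ρ t) / |h|)
          (nhdsWithin 0 {(0 : ℝ)}ᶜ) (nhds (g t))) ∧
      ∀ t s : ℝ, 0 ≤ t → t ≤ s → s ≤ 1 →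
        dist (ρ t) (ρ s) ≤ ∫ a in Set.Icc t s, g a := by
  classical
  -- the clamped curve
  set c : ℝ → ℝ := fun t => max 0 (min t 1) with hc
  have hcmem : ∀ t, c t ∈ Set.Icc (0:ℝ) 1 :=
    fun t => ⟨le_max_left _ _, max_le (by norm_num) (min_le_right _ _)⟩
  have hceq : ∀ t ∈ Set.Icc (0:ℝ) 1, c t = t := fun t ht => by
    simp only [hc]; rw [min_eq_left ht.2, max_eq_right ht.1]
  have hclip : ∀ s t : ℝ, |c s - c t| ≤ |s - t| := by
    intro s t
    simp only [hc]
    rw [max_comm 0 (min s 1), max_comm 0 (min t 1)]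
    refine (abs_max_sub_max_le_abs _ _ _).trans ?_
    refine (abs_min_sub_min_le_max s 1 t 1).trans ?_
    simp
  set σ : ℝ → X := fun t => ρ (c t) with hσ
  have hσlip : ∀ s t : ℝ, dist (σ s) (σ t) ≤ L * |s - t| := fun s t =>
    le_trans (hlip _ (hcmem s) _ (hcmem t)) (mul_le_mul_of_nonneg_left (hclip s t) hL.le)
  -- dense sequence of points
  set q : ℕ → ℝ := fun n => (((Denumerable.eqv ℚ).symm n : ℚ) : ℝ) with hq
  have hqdense : ∀ t : ℝ, ∀ ε > (0:ℝ), ∃ n, dist (σ t) (σ (q n)) < ε := by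
    intro t ε hε
    have hδ : (0:ℝ) < ε / (L + 1) := by positivity
    obtain ⟨r, hr1, hr2⟩ := exists_rat_btwn (show t - ε / (L+1) < t + ε / (L+1) by linarith)
    refine ⟨Denumerable.eqv ℚ r, ?_⟩
    have hqr : q (Denumerable.eqv ℚ r) = (r:ℝ) := by
      simp only [hq]
      exact congrArg (fun x : ℚ => (x:ℝ)) ((Denumerable.eqv ℚ).symm_apply_apply r)
    rw [hqr]
    calc dist (σ t) (σ (r:ℝ)) ≤ L * |t - (r:ℝ)| := hσlip _ _
      _ < ε := by
          have : |t - (r:ℝ)| < ε / (L+1) := by rw [abs_lt]; constructor <;> linarith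
          have hL1 : L / (L + 1) < 1 := by rw [div_lt_one] <;> linarith
          calc L * |t - (r:ℝ)| ≤ L * (ε / (L+1)) :=
                mul_le_mul_of_nonneg_left this.le hL.le
            _ = (L / (L+1)) * ε := by ring
            _ < 1 * ε := by exact mul_lt_mul_of_pos_right hL1 hε
            _ = ε := one_mul ε
  -- the distance functions
  set φ : ℕ → ℝ → ℝ := fun n t => dist (σ t) (σ (q n)) with hφ
  have hφlip : ∀ n, ∀ x y : ℝ, |φ n x - φ n y| ≤ L * |x - y| := fun n x y =>
    le_trans (abs_dist_sub_le _ _ _) (hσlip x y)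
  have hφlipW : ∀ n, LipschitzWith (Real.toNNReal L) (φ n) := fun n => by
    apply LipschitzWith.of_dist_le_mul
    intro x y
    rw [Real.dist_eq, Real.dist_eq, Real.coe_toNNReal L hL.le]
    exact hφlip n x y
  have hderivle : ∀ n (x : ℝ), |deriv (φ n) x| ≤ L := fun n x => by
    have := norm_deriv_le_of_lipschitz (𝕜 := ℝ) (x₀ := x) (hφlipW n)
    rwa [Real.norm_eq_abs, Real.coe_toNNReal L hL.le] at this
  -- the candidate metric derivative
  set g : ℝ → ℝ := fun t => ⨆ n, |deriv (φ n) t| with hg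
  have hbdd : ∀ t : ℝ, BddAbove (Set.range fun n => |deriv (φ n) t|) := fun t =>
    ⟨L, by rintro y ⟨n, rfl⟩; exact hderivle n t⟩
  have hgL : ∀ t, g t ≤ L := fun t => ciSup_le fun n => hderivle n t
  have h0g : ∀ t, 0 ≤ g t := fun t => le_trans (abs_nonneg _) (le_ciSup (hbdd t) 0)
  have hgm : Measurable g :=
    Measurable.iSup fun n => (measurable_deriv (φ n)).abs
  have hgle : ∀ n (x : ℝ), deriv (φ n) x ≤ g x := fun n x =>
    le_trans (le_abs_self _) (le_ciSup (hbdd x) n)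
  have hgi : ∀ a b : ℝ, IntegrableOn g (Set.Ioc a b) := fun a b => by
    apply Measure.integrableOn_of_bounded (M := L) measure_Ioc_lt_top.ne
      hgm.aestronglyMeasurable
    filter_upwards with y
    rw [Real.norm_eq_abs, abs_of_nonneg (h0g y)]
    exact hgL y
  -- key inequality
  have key : ∀ a b : ℝ, a ≤ b → dist (σ a) (σ b) ≤ ∫ x in Set.Ioc a b, g x := by
    intro a b hab
    refine le_of_forall_pos_le_add fun ε hε => ?_
    obtain ⟨n, hn⟩ := hqdense a (ε/2) (by positivity)
    have h1 : dist (σ a) (σ b) ≤ φ n a + φ n b := by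
      calc dist (σ a) (σ b) ≤ dist (σ a) (σ (q n)) + dist (σ (q n)) (σ b) := dist_triangle _ _ _
        _ = φ n a + φ n b := by rw [hφ]; simp [dist_comm]
    have h2 : φ n b - φ n a ≤ ∫ x in Set.Ioc a b, g x :=
      lipschitz_sub_le_integral L hL.le (φ n) g (hφlip n) hgi (hgle n) a b hab
    have h3 : φ n a < ε / 2 := hn
    linarith
  refine ⟨g, hgm, fun t => ⟨h0g t, hgL t⟩, ?_, ?_⟩
  · -- part (i)
    have haediff : ∀ᵐ x : ℝ, ∀ n, DifferentiableAt ℝ (φ n) x :=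
      ae_all_iff.2 fun n => (hφlipW n).ae_differentiableAt_of_real
    have hloc : LocallyIntegrable g := by
      intro x
      refine ⟨Metric.closedBall x 1, Metric.closedBall_mem_nhds x one_pos, ?_⟩
      apply Measure.integrableOn_of_bounded (M := L) measure_closedBall_lt_top.ne
        hgm.aestronglyMeasurable
      filter_upwards with y
      rw [Real.norm_eq_abs, abs_of_nonneg (h0g y)]
      exact hgL y
    refine (ae_restrict_iff' measurableSet_Ioo).2 ?_
    filter_upwards [haediff,
      IsUnifLocDoublingMeasure.ae_tendsto_average_norm_sub (μ := (volume : Measure ℝ)) hloc 1] with x hdiff hlebx hxIoo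
    have habs : Tendsto (fun h : ℝ => |h|) (𝓝[≠] (0:ℝ)) (𝓝[>] 0) := by
      rw [tendsto_nhdsWithin_iff]
      constructor
      · exact ((continuous_abs.tendsto' 0 0 abs_zero)).mono_left nhdsWithin_le_nhds
      · exact eventually_mem_nhdsWithin.mono fun h hh => Set.mem_Ioi.2 (abs_pos.2 (by simpa using hh))
    have hA : Tendsto (fun h : ℝ => ⨍ y in Metric.closedBall x |h|, ‖g y - g x‖)
        (𝓝[≠] (0:ℝ)) (𝓝 0) :=
      hlebx (fun _ => x) (fun h => |h|) habs (Filter.Eventually.of_forall fun h => by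
        simp [Metric.mem_closedBall, abs_nonneg])
    have hupper : ∀ h : ℝ, h ≠ 0 →
        dist (σ (x + h)) (σ x) / |h| ≤ g x + 2 * (⨍ y in Metric.closedBall x |h|, ‖g y - g x‖) := by
      intro h hne
      have h0 : (0:ℝ) < |h| := abs_pos.2 hne
      set a := min x (x + h) with ha
      set b := max x (x + h) with hb
      have hba : b - a = |h| := by
        rcases le_total 0 h with hh | hh
        · rw [hb, ha, min_eq_left (by linarith), max_eq_right (by linarith), abs_of_nonneg hh]; ring
        · rw [hb, ha, min_eq_right (by linarith), max_eq_left (by linarith), abs_of_nonpos hh]; ring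
      have hab : a ≤ b := min_le_max
      have hd1 : dist (σ (x + h)) (σ x) ≤ ∫ y in Set.Ioc a b, g y := by
        rcases le_total x (x + h) with hh | hh
        · rw [hb, ha, min_eq_left hh, max_eq_right hh, dist_comm]
          exact key x (x + h) hh
        · rw [hb, ha, min_eq_right hh, max_eq_left hh]
          exact key (x + h) x hh
      have hsub : Set.Ioc a b ⊆ Metric.closedBall x |h| := by
        intro y hy
        have h1 : x - |h| ≤ a := by
          rw [ha]
          exact le_min (by linarith) (by linarith [neg_abs_le h])
        have h2 : b ≤ x + |h| := by
          rw [hb]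
          exact max_le (by linarith) (by linarith [le_abs_self h])
        rw [Metric.mem_closedBall, Real.dist_eq, abs_le]
        exact ⟨by linarith [hy.1], by linarith [hy.2]⟩
      have hint1 : IntegrableOn (fun y => |g y - g x|) (Metric.closedBall x |h|) := by
        apply Measure.integrableOn_of_bounded (M := L + L) measure_closedBall_lt_top.ne
          ((hgm.sub measurable_const).abs.aestronglyMeasurable)
        filter_upwards with y
        rw [Real.norm_eq_abs, abs_abs]
        calc |g y - g x| ≤ |g y| + |g x| := abs_sub _ _
          _ ≤ L + L := by
              rw [abs_of_nonneg (h0g y), abs_of_nonneg (h0g x)]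
              exact add_le_add (hgL y) (hgL x)
      have hint2 : IntegrableOn (fun y => |g y - g x|) (Set.Ioc a b) := hint1.mono_set hsub
      have hi2 : (∫ y in Set.Ioc a b, g y) ≤ |h| * g x + ∫ y in Set.Ioc a b, |g y - g x| := by
        have hmono : (∫ y in Set.Ioc a b, g y)
            ≤ ∫ y in Set.Ioc a b, (g x + |g y - g x|) := by
          apply integral_mono_ae (hgi a b)
            ((integrableOn_const measure_Ioc_lt_top.ne).add hint2)
          filter_upwards with y
          simp only [Pi.add_apply]
          have := le_abs_self (g y - g x); linarith
        have hcg : IntegrableOn (fun _ : ℝ => g x) (Set.Ioc a b) := integrableOn_const measure_Ioc_lt_top.ne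
        rw [integral_add hcg hint2] at hmono
        have hconst : (∫ _ in Set.Ioc a b, g x) = (b - a) * g x := by
          simp [Real.volume_Ioc, ENNReal.toReal_ofReal (sub_nonneg.2 hab), smul_eq_mul, hab]
        rw [hconst, hba] at hmono
        exact hmono
      have hi3 : (∫ y in Set.Ioc a b, |g y - g x|)
          ≤ ∫ y in Metric.closedBall x |h|, |g y - g x| :=
        setIntegral_mono_set hint1 (Filter.Eventually.of_forall fun y => abs_nonneg _)
          (HasSubset.Subset.eventuallyLE hsub)
      have hvol : (volume (Metric.closedBall x |h|)).toReal = 2 * |h| := by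
        rw [Real.volume_closedBall, ENNReal.toReal_ofReal (by positivity)]
      have hi4 : (∫ y in Metric.closedBall x |h|, |g y - g x|)
          = 2 * |h| * ⨍ y in Metric.closedBall x |h|, ‖g y - g x‖ := by
        rw [setAverage_eq, measureReal_def, hvol]
        simp only [smul_eq_mul, Real.norm_eq_abs]
        rw [← mul_assoc, mul_inv_cancel₀ (by positivity), one_mul]
      rw [div_le_iff₀ h0]
      calc dist (σ (x + h)) (σ x) ≤ ∫ y in Set.Ioc a b, g y := hd1
        _ ≤ |h| * g x + ∫ y in Set.Ioc a b, |g y - g x| := hi2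
        _ ≤ |h| * g x + 2 * |h| * ⨍ y in Metric.closedBall x |h|, ‖g y - g x‖ := by
            rw [← hi4]; linarith [hi3]
        _ = (g x + 2 * (⨍ y in Metric.closedBall x |h|, ‖g y - g x‖)) * |h| := by ring
    have hlow : ∀ ε : ℝ, 0 < ε →
        ∀ᶠ h : ℝ in 𝓝[≠] (0:ℝ), g x - ε < dist (σ (x + h)) (σ x) / |h| := by
      intro ε hε
      obtain ⟨n, hn⟩ : ∃ n, g x - ε / 2 < |deriv (φ n) x| := by
        apply exists_lt_of_lt_ciSup
        have hx2 : g x - ε / 2 < g x := by linarith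
        simpa only [hg] using hx2
      have hqn : Tendsto (fun h : ℝ => |φ n (x + h) - φ n x| / |h|) (𝓝[≠] (0:ℝ))
          (𝓝 |deriv (φ n) x|) := by
        have h1 : Tendsto (fun h : ℝ => h⁻¹ • (φ n (x + h) - φ n x)) (𝓝[≠] (0:ℝ))
            (𝓝 (deriv (φ n) x)) :=
          hasDerivAt_iff_tendsto_slope_zero.1 (hdiff n).hasDerivAt
        have h2 := (continuous_abs.tendsto (deriv (φ n) x)).comp h1
        refine h2.congr fun h => ?_
        simp only [Function.comp_apply, smul_eq_mul, abs_mul, abs_inv]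
        rw [inv_mul_eq_div]
      have hev := hqn.eventually_const_lt (show g x - ε < |deriv (φ n) x| by linarith)
      filter_upwards [hev, eventually_mem_nhdsWithin] with h hh hne
      refine lt_of_lt_of_le hh ?_
      have hne' : h ≠ 0 := by simpa using hne
      gcongr
      exact abs_dist_sub_le (σ (x + h)) (σ x) (σ (q n))
    have T : Tendsto (fun h : ℝ => dist (σ (x + h)) (σ x) / |h|) (𝓝[≠] (0:ℝ)) (𝓝 (g x)) := by
      rw [Metric.tendsto_nhds]
      intro ε hε
      have h2A : ∀ᶠ h : ℝ in 𝓝[≠] (0:ℝ),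
          2 * (⨍ y in Metric.closedBall x |h|, ‖g y - g x‖) < ε := by
        have h3 := hA.const_mul 2
        simp only [mul_zero] at h3
        exact h3.eventually_lt_const hε
      filter_upwards [hlow ε hε, h2A, eventually_mem_nhdsWithin] with h h1 h2 hne
      rw [Real.dist_eq, abs_sub_lt_iff]
      have h4 := hupper h (by simpa using hne)
      constructor <;> linarith
    have hx0 := hxIoo.1
    have hx1 := hxIoo.2
    have hev : (fun h : ℝ => dist (σ (x + h)) (σ x) / |h|) =ᶠ[𝓝[≠] (0:ℝ)]
        (fun h : ℝ => dist (ρ (x + h)) (ρ x) / |h|) := by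
      have hball : Metric.ball (0:ℝ) (min x (1 - x)) ∈ 𝓝[≠] (0:ℝ) :=
        nhdsWithin_le_nhds (Metric.ball_mem_nhds _ (lt_min (by linarith) (by linarith)))
      filter_upwards [hball] with h hh
      rw [Metric.mem_ball, Real.dist_eq, sub_zero] at hh
      obtain ⟨hh1, hh2⟩ := abs_lt.1 hh
      have hm1 : min x (1 - x) ≤ x := min_le_left _ _
      have hm2 : min x (1 - x) ≤ 1 - x := min_le_right _ _
      have hmem : x + h ∈ Set.Icc (0:ℝ) 1 := ⟨by linarith, by linarith⟩
      have e1 : σ (x + h) = ρ (x + h) := by rw [hσ]; simp only; rw [hceq _ hmem]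
      have e2 : σ x = ρ x := by rw [hσ]; simp only; rw [hceq x ⟨hx0.le, hx1.le⟩]
      rw [e1, e2]
    exact T.congr' hev
  · -- part (ii)
    intro t s ht hts hs1
    have e1 : σ t = ρ t := by rw [hσ]; simp only; rw [hceq t ⟨ht, hts.trans hs1⟩]
    have e2 : σ s = ρ s := by rw [hσ]; simp only; rw [hceq s ⟨ht.trans hts, hs1⟩]
    rw [← e1, ← e2, MeasureTheory.integral_Icc_eq_integral_Ioc]
    exact key t s hts
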